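/- Let d ≥ 2 and let P be a d-dimensional polytope in ℝ^d with at most k facets. Then P has at most C(k, ⌊k/2⌋) edges, where C denotes the binomial coefficient; in particular, P has at most 2^k edges. -/

import Mathlib

open scoped RealInnerProductSpace

noncomputable section

/-- `ℝ^n` with the Euclidean norm. -/
abbrev ESp (n : ℕ) := EuclideanSpace ℝ (Fin n)

/-- A polytope is the convex hull of a finite set of points. -/
def IsPolytope {n : ℕ} (P : Set (ESp n)) : Prop :=
  ∃ V : Finset (ESp n), P = convexHull ℝ (V : Set (ESp n))

/-- The vertex set `F₀(P)` of a polytope: its extreme points. -/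
def verts {n : ℕ} (P : Set (ESp n)) : Set (ESp n) := Set.extremePoints ℝ P

/-- The dimension of a polytope: the dimension of its affine hull. -/
def polyDim {n : ℕ} (P : Set (ESp n)) : ℕ :=
  Module.finrank ℝ (affineSpan ℝ P).direction

/-- The faces of a polytope `P` are `∅`, `P`, and the intersections of `P` with a
hyperplane having `P` in one of its closed sides. -/
def IsFaceOf {n : ℕ} (P F : Set (ESp n)) : Prop :=
  F = ∅ ∨ F = P ∨ ∃ (c : ESp n) (a : ℝ), c ≠ 0 ∧ (∀ x ∈ P, ⟪c, x⟫ ≤ a) ∧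
    F = {x ∈ P | ⟪c, x⟫ = a}

/-- Denominator `⟨c, x⟩ + δ` of the projective map given by an `(n+1)×(n+1)` matrix `M`
(the last row of `M` is `(c, δ)`). -/
def projDen {n : ℕ} (M : Matrix (Fin (n + 1)) (Fin (n + 1)) ℝ) (x : ESp n) : ℝ :=
  (∑ j, M (Fin.last n) j.castSucc * x j) + M (Fin.last n) (Fin.last n)

/-- The projective transformation `x ↦ (Ax + b)/(⟨c, x⟩ + δ)` given by the
`(n+1)×(n+1)` matrix `M` with blocks `A, b, c, δ`. -/
def projApp {n : ℕ} (M : Matrix (Fin (n + 1)) (Fin (n + 1)) ℝ) (x : ESp n) : ESp n :=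
  WithLp.toLp 2 (fun i : Fin n => ((∑ j, M i.castSucc j.castSucc * x j) + M i.castSucc (Fin.last n)) / projDen M x)

/-- Two sets are projectively equivalent if some projective transformation (given by an
invertible matrix), defined at every point of the first set, maps it bijectively onto the
second one. -/
def ProjEquiv {n : ℕ} (S T : Set (ESp n)) : Prop :=
  ∃ M : Matrix (Fin (n + 1)) (Fin (n + 1)) ℝ, IsUnit M.det ∧
    (∀ x ∈ S, projDen M x ≠ 0) ∧ Set.BijOn (projApp M) S T

/-- `S` is the vertex set of some face of `P`. -/
def IsVertexSetOfFace {n : ℕ} (P S : Set (ESp n)) : Prop :=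
  ∃ F, IsFaceOf P F ∧ verts F = S

/-- Combinatorial equivalence of two polytopes under a vertex bijection `φ`. -/
def CombEquivUnder {n : ℕ} (P P' : Set (ESp n)) (φ : ESp n → ESp n) : Prop :=
  Set.BijOn φ (verts P) (verts P') ∧
  ∀ S ⊆ verts P, IsVertexSetOfFace P S ↔ IsVertexSetOfFace P' (φ '' S)

/-- A polytope `P ⊆ ℝ^n` is projectively unique if every combinatorial equivalence of `P`
with a polytope `P'` in `ℝ^n` agrees on the vertices with a projective transformation
defined at all points of `P` and mapping `P` onto `P'`. -/
def ProjUniquePolytope {n : ℕ} (P : Set (ESp n)) : Prop :=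
  IsPolytope P ∧ ∀ (P' : Set (ESp n)) (φ : ESp n → ESp n),
    IsPolytope P' → CombEquivUnder P P' φ →
    ∃ M : Matrix (Fin (n + 1)) (Fin (n + 1)) ℝ, IsUnit M.det ∧
      (∀ x ∈ P, projDen M x ≠ 0) ∧ (∀ w ∈ verts P, projApp M w = φ w) ∧
      Set.BijOn (projApp M) P P'

/-- The standard coordinate embedding `ℝ^d ⊆ ℝ^n` for `d ≤ n`. -/
def coordEmbed {d n : ℕ} (_h : d ≤ n) (x : ESp d) : ESp n :=
  WithLp.toLp 2 (fun i : Fin n => if h' : (i : ℕ) < d then x ⟨i, h'⟩ else 0)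

/-- Lawrence equivalence of two point configurations under a bijection `φ`:
for every oriented hyperplane `H` there is an oriented hyperplane `H'` with
`φ(R ∩ H₊) = R' ∩ H'₊` and `φ(R ∩ H₋) = R' ∩ H'₋`. -/
def LawrenceEquivConfig {n : ℕ} (R R' : Set (ESp n)) (φ : ESp n → ESp n) : Prop :=
  Set.BijOn φ R R' ∧
  ∀ (c : ESp n) (a : ℝ), c ≠ 0 →
    ∃ (c' : ESp n) (a' : ℝ), c' ≠ 0 ∧
      φ '' (R ∩ {x | a < ⟪c, x⟫}) = R' ∩ {x | a' < ⟪c', x⟫} ∧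
      φ '' (R ∩ {x | ⟪c, x⟫ < a}) = R' ∩ {x | ⟪c', x⟫ < a'}

/-- A point configuration is projectively unique if every Lawrence equivalence with another
point configuration agrees on it with a projective transformation defined at all its points. -/
def ProjUniqueConfig {n : ℕ} (R : Set (ESp n)) : Prop :=
  R.Finite ∧ ∀ (R' : Set (ESp n)) (φ : ESp n → ESp n),
    LawrenceEquivConfig R R' φ →
    ∃ M : Matrix (Fin (n + 1)) (Fin (n + 1)) ℝ, IsUnit M.det ∧
      (∀ x ∈ R, projDen M x ≠ 0) ∧ ∀ x ∈ R, projApp M x = φ x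

/-- `R` is framed by `Q ⊆ R` if every Lawrence equivalence of `R` with another point
configuration that is the identity on `Q` is the identity on `R`. -/
def FramedBy {n : ℕ} (R Q : Set (ESp n)) : Prop :=
  Q ⊆ R ∧ ∀ (R' : Set (ESp n)) (φ : ESp n → ESp n),
    LawrenceEquivConfig R R' φ → (∀ q ∈ Q, φ q = q) → ∀ x ∈ R, φ x = x

/-- A PP configuration: a polytope together with a finite point set disjoint from it. -/
def IsPPConfig {n : ℕ} (P R : Set (ESp n)) : Prop :=
  IsPolytope P ∧ R.Finite ∧ P ∩ R = ∅

/-- Lawrence equivalence of PP configurations under a bijection `φ` of `F₀(P) ∪ R` with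
`F₀(P') ∪ R'` mapping `F₀(P)` onto `F₀(P')` and `R` onto `R'`. -/
def LawrenceEquivPP {n : ℕ} (P R P' R' : Set (ESp n)) (φ : ESp n → ESp n) : Prop :=
  Set.InjOn φ (verts P ∪ R) ∧ Set.BijOn φ (verts P) (verts P') ∧ Set.BijOn φ R R' ∧
  ∀ (c : ESp n) (a : ℝ), c ≠ 0 → (∀ x ∈ P, ⟪c, x⟫ ≤ a) →
    ∃ (c' : ESp n) (a' : ℝ), c' ≠ 0 ∧ (∀ x ∈ P', ⟪c', x⟫ ≤ a') ∧
      φ '' (verts P ∩ {x | ⟪c, x⟫ < a}) = verts P' ∩ {x | ⟪c', x⟫ < a'} ∧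
      φ '' (R ∩ {x | a < ⟪c, x⟫}) = R' ∩ {x | a' < ⟪c', x⟫} ∧
      φ '' (R ∩ {x | ⟪c, x⟫ < a}) = R' ∩ {x | ⟪c', x⟫ < a'}

/-- A PP configuration `(P, R)` is projectively unique if every Lawrence equivalence with
another PP configuration agrees on `F₀(P) ∪ R` with a projective transformation defined at
all points of `F₀(P) ∪ R`. -/
def ProjUniquePP {n : ℕ} (P R : Set (ESp n)) : Prop :=
  IsPPConfig P R ∧ ∀ (P' R' : Set (ESp n)) (φ : ESp n → ESp n),
    IsPPConfig P' R' → LawrenceEquivPP P R P' R' φ →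
    ∃ M : Matrix (Fin (n + 1)) (Fin (n + 1)) ℝ, IsUnit M.det ∧
      (∀ x ∈ verts P ∪ R, projDen M x ≠ 0) ∧ ∀ x ∈ verts P ∪ R, projApp M x = φ x

/-- `(P, R)` is framed by `Q ⊆ F₀(P) ∪ R` if every Lawrence equivalence of `(P, R)` with
another PP configuration that is the identity on `Q` is the identity. -/
def FramedPP {n : ℕ} (P R Q : Set (ESp n)) : Prop :=
  Q ⊆ verts P ∪ R ∧ ∀ (P' R' : Set (ESp n)) (φ : ESp n → ESp n),
    IsPPConfig P' R' → LawrenceEquivPP P R P' R' φ → (∀ q ∈ Q, φ q = q) →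
    ∀ x ∈ verts P ∪ R, φ x = x

/-- A polytope `P` is framed by `Q ⊆ F₀(P)` if `(P, ∅)` is framed by `Q`. -/
def PolytopeFramedBy {n : ℕ} (P Q : Set (ESp n)) : Prop := FramedPP P ∅ Q

/-- A weak projective triple `(P, Q, R)` in `ℝ^d`. -/
def WeakProjTriple {d : ℕ} (P Q R : Set (ESp d)) : Prop :=
  IsPolytope P ∧ Q ⊆ verts P ∧ R.Finite ∧
  ProjUniqueConfig (Q ∪ R) ∧
  PolytopeFramedBy P Q ∧
  ∃ S ⊆ R, ∃ (c : ESp d) (a : ℝ), c ≠ 0 ∧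
    (affineSpan ℝ S : Set (ESp d)) = {x | ⟪c, x⟫ = a} ∧
    {x | ⟪c, x⟫ = a} ∩ P = ∅

/-- A subpolytope of `S`: a convex hull of a subset of the vertices of `S`. -/
def IsSubpolytopeOf {n : ℕ} (P S : Set (ESp n)) : Prop :=
  ∃ V ⊆ verts S, P = convexHull ℝ V

/-- Stacked `d`-polytopes: `d`-simplices, closed under stacking a point `v` beyond a facet
`F` (i.e. `v` and the interior of `S` lie strictly on opposite sides of the affine hull of
`F`, and strictly on the same side of the affine hull of every other facet of `S`). -/
inductive IsStackedPolytope (d : ℕ) : Set (ESp d) → Prop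
  | simplex (V : Finset (ESp d)) (hcard : V.card = d + 1)
      (hind : AffineIndependent ℝ (Subtype.val : {x : ESp d // x ∈ V} → ESp d)) :
      IsStackedPolytope d (convexHull ℝ (V : Set (ESp d)))
  | stack (S F : Set (ESp d)) (v : ESp d) (hS : IsStackedPolytope d S)
      (hF : IsFaceOf S F) (hdim : polyDim F + 1 = d)
      (hbeyond : ∀ F', IsFaceOf S F' → polyDim F' + 1 = d →
        ∃ (c : ESp d) (a : ℝ), c ≠ 0 ∧
          (affineSpan ℝ F' : Set (ESp d)) = {x | ⟪c, x⟫ = a} ∧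
          interior S ⊆ {x | ⟪c, x⟫ < a} ∧
          (F' = F → a < ⟪c, v⟫) ∧ (F' ≠ F → ⟪c, v⟫ < a)) :
      IsStackedPolytope d (convexHull ℝ (S ∪ {v}))

/-- The first standard basis vector `e₁` of `ℝ²`. -/
def e1 : ESp 2 := EuclideanSpace.single 0 1

/-- The point configuration `Q² + 𝟏 = {0, 1, 2}²` in `ℝ²`. -/
def Qsq : Set (ESp 2) := {p | ∀ i, p i = 0 ∨ p i = 1 ∨ p i = 2}

/-- A functional arrangement for a function `f : ℝ^ι → ℝ`. -/
def IsFunctionalArrangement {ι : Type} [Fintype ι]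
    (f : (ι → ℝ) → ℝ) (F : (ι → ℝ) → Set (ESp 2)) : Prop :=
  ∀ x : ι → ℝ,
    (F x).Finite ∧
    (f x) • e1 ∈ F x ∧
    (∀ i, (x i) • e1 ∈ F x) ∧
    Qsq ⊆ F x ∧
    FramedBy (F x) ({p | ∃ i, p = (x i) • e1} ∪ Qsq) ∧
    ∀ (R' : Set (ESp 2)) (φ : ESp 2 → ESp 2),
      LawrenceEquivConfig (F x) R' φ → (∀ q ∈ Qsq, φ q = q) →
      φ ((f x) • e1) = (f x) • e1 →
      ∃ y : ι → ℝ, f y = f x ∧ ∀ i, φ ((x i) • e1) = (y i) • e1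

section SpernerAux

open Module

variable {d : ℕ}

private lemma innerLin (c : ESp d) : IsLinearMap ℝ (fun x : ESp d => ⟪c, x⟫) :=
  ⟨fun x y => inner_add_right c x y, fun r x => real_inner_smul_right c x r⟩

private lemma inner_affineSpan_const {c : ESp d} {a : ℝ} {S : Set (ESp d)}
    (hS : ∀ x ∈ S, ⟪c, x⟫ = a) : ∀ x ∈ affineSpan ℝ S, ⟪c, x⟫ = a := by
  intro x hx
  refine affineSpan_induction (p := fun z => ⟪c, z⟫ = a) hx hS ?_
  intro r u v w hu hv hw
  have : (r • (u -ᵥ v) +ᵥ w : ESp d) = r • (u - v) + w := by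
    simp [vsub_eq_sub, vadd_eq_add]
  rw [this, inner_add_right, real_inner_smul_right, inner_sub_right, hu, hv, hw]
  ring

private lemma nonempty_of_polyDim_pos {F : Set (ESp d)} (h : 0 < polyDim F) : F.Nonempty := by
  rcases Set.eq_empty_or_nonempty F with rfl | h'
  · rw [polyDim, AffineSubspace.span_empty, AffineSubspace.direction_bot, finrank_bot] at h
    omega
  · exact h'

private lemma face_subset {P F : Set (ESp d)} (h : IsFaceOf P F) : F ⊆ P := by
  rcases h with rfl | rfl | ⟨c, a, _, _, rfl⟩
  · exact Set.empty_subset _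
  · exact subset_rfl
  · exact Set.sep_subset _ _

private lemma polyDim_le_pred {c : ESp d} (hc : c ≠ 0) {a : ℝ}
    {G : Set (ESp d)} (hG : ∀ x ∈ G, ⟪c, x⟫ = a) : polyDim G + 1 ≤ d := by
  classical
  have hfr : finrank ℝ (ESp d) = d := finrank_euclideanSpace_fin
  set f : ESp d →ₗ[ℝ] ℝ := IsLinearMap.mk' _ (innerLin c) with hf
  have hker : polyDim G ≤ finrank ℝ (LinearMap.ker f) := by
    rcases Set.eq_empty_or_nonempty G with rfl | ⟨p, hp⟩
    · rw [polyDim, AffineSubspace.span_empty, AffineSubspace.direction_bot, finrank_bot]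
      omega
    · refine Submodule.finrank_mono ?_
      intro u hu
      rw [AffineSubspace.mem_direction_iff_eq_vsub ⟨p, subset_affineSpan ℝ G hp⟩] at hu
      obtain ⟨p1, h1, p2, h2, rfl⟩ := hu
      have e1 := inner_affineSpan_const hG _ h1
      have e2 := inner_affineSpan_const hG _ h2
      have : f (p1 -ᵥ p2) = 0 := by
        show ⟪c, p1 -ᵥ p2⟫ = 0
        rw [vsub_eq_sub, inner_sub_right, e1, e2, sub_self]
      exact LinearMap.mem_ker.mpr this
  have hrk := LinearMap.finrank_range_add_finrank_ker f
  rw [hfr] at hrk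
  have hrange : LinearMap.range f ≠ ⊥ := by
    rw [Submodule.ne_bot_iff]
    refine ⟨f c, ⟨c, rfl⟩, ?_⟩
    show ⟪c, c⟫ ≠ 0
    exact inner_self_ne_zero.mpr hc
  have h1 : 1 ≤ finrank ℝ (LinearMap.range f) := by
    by_contra h
    push_neg at h
    interval_cases h' : finrank ℝ (LinearMap.range f)
    · exact hrange (Submodule.finrank_eq_zero.mp h')
  omega

set_option maxHeartbeats 1000000 in
private lemma exists_facet_avoiding
    {V : Finset (ESp d)} {P : Set (ESp d)}
    (hPV : P = convexHull ℝ (V : Set (ESp d)))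
    (htop : affineSpan ℝ P = ⊤)
    {y : ESp d} (hyP : y ∈ P) :
    ∀ (n : ℕ) (G : Set (ESp d)), d ≤ n + 1 + polyDim G → IsFaceOf P G →
      G.Nonempty → y ∉ G →
      ∃ G', IsFaceOf P G' ∧ polyDim G' + 1 = d ∧ G ⊆ G' ∧ y ∉ G' := by
  have hVP : (V : Set (ESp d)) ⊆ P := by rw [hPV]; exact subset_convexHull ℝ _
  intro n
  induction n with
  | zero =>
    intro G hle hface hne hy
    obtain ⟨c, a, hc, hub, hGeq⟩ : ∃ c a, c ≠ 0 ∧ (∀ x ∈ P, ⟪c, x⟫ ≤ a) ∧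
        G = {x ∈ P | ⟪c, x⟫ = a} := by
      rcases hface with rfl | rfl | h
      · exact absurd hne (by simp)
      · exact absurd hyP hy
      · exact h
    have hGhyp : ∀ x ∈ G, ⟪c, x⟫ = a := fun x hx => by rw [hGeq] at hx; exact hx.2
    have := polyDim_le_pred hc hGhyp
    exact ⟨G, hface, by omega, subset_rfl, hy⟩
  | succ n ih =>
    intro G hle hface hne hy
    obtain ⟨c, a, hc, hub, hGeq⟩ : ∃ c a, c ≠ 0 ∧ (∀ x ∈ P, ⟪c, x⟫ ≤ a) ∧
        G = {x ∈ P | ⟪c, x⟫ = a} := by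
      rcases hface with rfl | rfl | h
      · exact absurd hne (by simp)
      · exact absurd hyP hy
      · exact h
    have hGhyp : ∀ x ∈ G, ⟪c, x⟫ = a := fun x hx => by rw [hGeq] at hx; exact hx.2
    have hdimle : polyDim G + 1 ≤ d := polyDim_le_pred hc hGhyp
    by_cases hcase : polyDim G + 1 = d
    · exact ⟨G, hface, hcase, subset_rfl, hy⟩
    -- rotation
    obtain ⟨p, hpG⟩ := hne
    have hpP : p ∈ P := (hGeq ▸ hpG).1
    set D := (affineSpan ℝ G).direction with hD
    set K := D ⊔ (ℝ ∙ (y - p)) with hK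
    have hfr : finrank ℝ (ESp d) = d := finrank_euclideanSpace_fin
    have hKfr : finrank ℝ K ≤ polyDim G + 1 := by
      have h1 : finrank ℝ (ℝ ∙ (y - p)) ≤ 1 := by
        rcases eq_or_ne (y - p) 0 with h | h
        · rw [h, Submodule.span_zero_singleton, finrank_bot]; omega
        · rw [finrank_span_singleton h]
      have h2 : finrank ℝ K + finrank ℝ ↥(D ⊓ (ℝ ∙ (y - p))) =
          finrank ℝ D + finrank ℝ ↥(ℝ ∙ (y - p)) :=
        Submodule.finrank_sup_add_finrank_inf_eq D (ℝ ∙ (y - p))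
      have h3 : finrank ℝ D = polyDim G := rfl
      omega
    have hKne : K ≠ ⊤ := by
      intro h
      rw [h, finrank_top, hfr] at hKfr
      omega
    obtain ⟨c', hc'K, hc'0⟩ : ∃ c' ∈ Kᗮ, c' ≠ 0 := by
      have : Kᗮ ≠ ⊥ := fun h => hKne (Submodule.orthogonal_eq_bot_iff.mp h)
      rw [Submodule.ne_bot_iff] at this
      obtain ⟨x, hx, hx0⟩ := this
      exact ⟨x, hx, hx0⟩
    have hc'D : ∀ u ∈ D, ⟪c', u⟫ = 0 := fun u hu =>
      Submodule.inner_left_of_mem_orthogonal (Submodule.mem_sup_left hu) hc'K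
    have hc'y : ⟪c', y - p⟫ = 0 :=
      Submodule.inner_left_of_mem_orthogonal
        (Submodule.mem_sup_right (Submodule.mem_span_singleton_self _)) hc'K
    have hGc' : ∀ x ∈ G, ⟪c', x⟫ = ⟪c', p⟫ := by
      intro x hx
      have hxs : x ∈ affineSpan ℝ G := subset_affineSpan ℝ G hx
      have hps : p ∈ affineSpan ℝ G := subset_affineSpan ℝ G hpG
      have hmem : x - p ∈ D := by
        have := AffineSubspace.vsub_mem_direction hxs hps
        rwa [vsub_eq_sub] at this
      have := hc'D _ hmem
      rw [inner_sub_right] at this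
      linarith
    have hVne : ∃ v ∈ V, ⟪c', v⟫ ≠ ⟪c', p⟫ := by
      by_contra h
      push_neg at h
      have hPsub : ∀ x ∈ P, ⟪c', x⟫ = ⟪c', p⟫ := by
        intro x hx
        rw [hPV] at hx
        exact convexHull_min h (convex_hyperplane (innerLin c') _) hx
      have := inner_affineSpan_const hPsub (p + c') (by rw [htop]; exact AffineSubspace.mem_top ℝ _ _)
      rw [inner_add_right] at this
      have h2 : ⟪c', c'⟫ = (0 : ℝ) := by linarith
      exact hc'0 (inner_self_eq_zero.mp h2)
    obtain ⟨e, he0, heD, hey, v₀, hv₀V, hv₀⟩ :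
        ∃ e : ESp d, e ≠ 0 ∧ (∀ u ∈ D, ⟪e, u⟫ = 0) ∧ ⟪e, y - p⟫ = 0 ∧
          ∃ v₀ ∈ V, ⟪e, p⟫ < ⟪e, v₀⟫ := by
      obtain ⟨v₀, hv₀V, hne0⟩ := hVne
      rcases lt_or_gt_of_ne hne0 with h | h
      · refine ⟨-c', neg_ne_zero.mpr hc'0, fun u hu => ?_, ?_, v₀, hv₀V, ?_⟩
        · rw [inner_neg_left, hc'D u hu, neg_zero]
        · rw [inner_neg_left, hc'y, neg_zero]
        · rw [inner_neg_left, inner_neg_left]; linarith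
      · exact ⟨c', hc'0, hc'D, hc'y, v₀, hv₀V, h⟩
    have heG : ∀ x ∈ G, ⟪e, x⟫ = ⟪e, p⟫ := by
      intro x hx
      have hxs : x ∈ affineSpan ℝ G := subset_affineSpan ℝ G hx
      have hps : p ∈ affineSpan ℝ G := subset_affineSpan ℝ G hpG
      have hmem : x - p ∈ D := by
        have := AffineSubspace.vsub_mem_direction hxs hps
        rwa [vsub_eq_sub] at this
      have := heD _ hmem
      rw [inner_sub_right] at this
      linarith
    classical
    set T := V.filter (fun v => ⟪e, p⟫ < ⟪e, v⟫) with hT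
    have hTne : T.Nonempty := ⟨v₀, Finset.mem_filter.mpr ⟨hv₀V, hv₀⟩⟩
    have hTstrict : ∀ v ∈ T, ⟪c, v⟫ < a := by
      intro v hv
      rw [hT, Finset.mem_filter] at hv
      rcases lt_or_eq_of_le (hub v (hVP hv.1)) with h | h
      · exact h
      · exfalso
        have hvG : v ∈ G := by rw [hGeq]; exact ⟨hVP hv.1, h⟩
        have := heG v hvG
        linarith [hv.2]
    obtain ⟨w, hwT, hwmin⟩ := T.exists_min_image
      (fun v => (a - ⟪c, v⟫) / (⟪e, v⟫ - ⟪e, p⟫)) hTne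
    have hwV : w ∈ V := (Finset.mem_filter.mp hwT).1
    have hwpos : (0:ℝ) < ⟪e, w⟫ - ⟪e, p⟫ := by
      have := (Finset.mem_filter.mp hwT).2; linarith
    set t := (a - ⟪c, w⟫) / (⟪e, w⟫ - ⟪e, p⟫) with ht
    have ht0 : 0 < t := div_pos (by linarith [hTstrict w hwT]) hwpos
    set c1 := c + t • e with hc1def
    set a1 := a + t * ⟪e, p⟫ with ha1def
    have hkey : ∀ x : ESp d, ⟪c1, x⟫ - a1 = (⟪c, x⟫ - a) + t * (⟪e, x⟫ - ⟪e, p⟫) := by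
      intro x
      rw [hc1def, ha1def, inner_add_left, real_inner_smul_left]
      ring
    have hubV : ∀ v ∈ V, ⟪c1, v⟫ ≤ a1 := by
      intro v hv
      have hva : ⟪c, v⟫ ≤ a := hub v (hVP hv)
      rcases le_or_gt ⟪e, v⟫ ⟪e, p⟫ with h | h
      · nlinarith [hkey v]
      · have hvT : v ∈ T := Finset.mem_filter.mpr ⟨hv, h⟩
        have hmin : (a - ⟪c, w⟫) / (⟪e, w⟫ - ⟪e, p⟫) ≤
            (a - ⟪c, v⟫) / (⟪e, v⟫ - ⟪e, p⟫) := hwmin v hvT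
        have hden : (0:ℝ) < ⟪e, v⟫ - ⟪e, p⟫ := by linarith
        have : t * (⟪e, v⟫ - ⟪e, p⟫) ≤ a - ⟪c, v⟫ := by
          rw [ht, ← le_div_iff₀ hden]
          exact hmin
        nlinarith [hkey v]
    have hub1 : ∀ x ∈ P, ⟪c1, x⟫ ≤ a1 := by
      intro x hx
      rw [hPV] at hx
      have hconv : Convex ℝ {z : ESp d | ⟪c1, z⟫ ≤ a1} :=
        convex_halfSpace_le (innerLin c1) a1
      have hsubV : (V : Set (ESp d)) ⊆ {z : ESp d | ⟪c1, z⟫ ≤ a1} := hubV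
      exact convexHull_min hsubV hconv hx
    have hweq : ⟪c1, w⟫ = a1 := by
      have : t * (⟪e, w⟫ - ⟪e, p⟫) = a - ⟪c, w⟫ := by
        rw [ht]
        exact div_mul_cancel₀ _ (ne_of_gt hwpos)
      have hk := hkey w
      linarith
    have hy1 : ⟪c1, y⟫ < a1 := by
      have hey' : ⟪e, y⟫ - ⟪e, p⟫ = 0 := by
        rw [inner_sub_right] at hey; linarith
      have hya : ⟪c, y⟫ < a := by
        rcases lt_or_eq_of_le (hub y hyP) with h | h
        · exact h
        · exact absurd (hGeq ▸ ⟨hyP, h⟩ : y ∈ G) hy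
      have hk := hkey y
      rw [hey'] at hk
      linarith
    have hc10 : c1 ≠ 0 := by
      intro h
      rw [h] at hweq hy1
      simp only [inner_zero_left] at hweq hy1
      linarith
    set G1 : Set (ESp d) := {x ∈ P | ⟪c1, x⟫ = a1} with hG1
    have hface1 : IsFaceOf P G1 := Or.inr (Or.inr ⟨c1, a1, hc10, hub1, rfl⟩)
    have hGG1 : G ⊆ G1 := by
      intro x hx
      refine ⟨(hGeq ▸ hx).1, ?_⟩
      have h1 : ⟪c, x⟫ = a := hGhyp x hx
      have h2 : ⟪e, x⟫ = ⟪e, p⟫ := heG x hx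
      have hk := hkey x
      rw [h1, h2] at hk
      have hz : ⟪c1, x⟫ - a1 = 0 := by rw [hk]; ring
      linarith
    have hwG1 : w ∈ G1 := ⟨hVP hwV, hweq⟩
    have hyG1 : y ∉ G1 := fun h => by
      have := h.2; linarith
    have hdlt : polyDim G < polyDim G1 := by
      have hDle : D < (affineSpan ℝ G1).direction := by
        refine lt_of_le_of_ne (AffineSubspace.direction_le (affineSpan_mono ℝ hGG1)) ?_
        intro hDeq
        have hwp : w - p ∈ (affineSpan ℝ G1).direction := by
          have := AffineSubspace.vsub_mem_direction
            (subset_affineSpan ℝ G1 hwG1) (subset_affineSpan ℝ G1 (hGG1 hpG))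
          rwa [vsub_eq_sub] at this
        rw [← hDeq] at hwp
        have := heD _ hwp
        rw [inner_sub_right] at this
        linarith
      exact Submodule.finrank_lt_finrank_of_lt hDle
    obtain ⟨G', hf', hd', hsub', hy'⟩ := ih G1 (by omega) hface1 ⟨w, hwG1⟩ hyG1
    exact ⟨G', hf', hd', hGG1.trans hsub', hy'⟩

private lemma edge_eq_inter
    {V : Finset (ESp d)} {P : Set (ESp d)}
    (hPV : P = convexHull ℝ (V : Set (ESp d)))
    (htop : affineSpan ℝ P = ⊤)
    {E : Set (ESp d)} (hE : IsFaceOf P E) (hE1 : polyDim E = 1) :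
    E = {x ∈ P | ∀ G, IsFaceOf P G → polyDim G + 1 = d → E ⊆ G → x ∈ G} := by
  have hEne : E.Nonempty := nonempty_of_polyDim_pos (by omega)
  have hEP : E ⊆ P := face_subset hE
  apply Set.Subset.antisymm
  · exact fun x hx => ⟨hEP hx, fun G _ _ hsub => hsub hx⟩
  · rintro x ⟨hxP, hxG⟩
    by_contra hxE
    obtain ⟨G', hf, hdim', hsub, hx'⟩ :=
      exists_facet_avoiding hPV htop hxP d E (by omega) hE hEne hxE
    exact hx' (hxG G' hf hdim' hsub)

private lemma edge_eq_of_subset {P E E' : Set (ESp d)} (hd2 : 2 ≤ d)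
    (hdim : polyDim P = d)
    (hE : IsFaceOf P E) (hE1 : polyDim E = 1)
    (hE' : IsFaceOf P E') (hE'1 : polyDim E' = 1) (hsub : E' ⊆ E) : E = E' := by
  have hne' : E'.Nonempty := nonempty_of_polyDim_pos (by omega)
  obtain ⟨c', a', hc', hub', hEq'⟩ : ∃ c a, c ≠ 0 ∧ (∀ x ∈ P, ⟪c, x⟫ ≤ a) ∧
      E' = {x ∈ P | ⟪c, x⟫ = a} := by
    rcases hE' with rfl | rfl | h
    · exact absurd hne' (by simp)
    · rw [hE'1] at hdim; omega
    · exact h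
  have hEP : E ⊆ P := face_subset hE
  have hle : affineSpan ℝ E' ≤ affineSpan ℝ E := affineSpan_mono ℝ hsub
  have hdir : (affineSpan ℝ E').direction = (affineSpan ℝ E).direction :=
    Submodule.eq_of_le_of_finrank_le (AffineSubspace.direction_le hle)
      (le_of_eq (hE1.trans hE'1.symm))
  have hspan : affineSpan ℝ E' = affineSpan ℝ E := by
    obtain ⟨q, hq⟩ := hne'
    exact AffineSubspace.ext_of_direction_eq hdir
      ⟨q, subset_affineSpan ℝ E' hq, subset_affineSpan ℝ E (hsub hq)⟩
  refine Set.Subset.antisymm ?_ hsub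
  intro x hx
  have hE'hyp : ∀ z ∈ E', ⟪c', z⟫ = a' := fun z hz => (hEq' ▸ hz).2
  have hx' : ⟪c', x⟫ = a' := by
    refine inner_affineSpan_const hE'hyp x ?_
    rw [hspan]
    exact subset_affineSpan ℝ E hx
  rw [hEq']
  exact ⟨hEP hx, hx'⟩

end SpernerAux

/-- **Sperner bound.** A `d`-polytope with at most `k` facets has at most
`C(k, ⌊k/2⌋) ≤ 2^k` edges. -/
theorem edges_le_of_facets_le
    (d k : ℕ) (hd : 2 ≤ d) (P : Set (ESp d)) (hP : IsPolytope P)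
    (hdim : polyDim P = d)
    (hfin : {F | IsFaceOf P F ∧ polyDim F + 1 = d}.Finite)
    (hfacets : {F | IsFaceOf P F ∧ polyDim F + 1 = d}.ncard ≤ k) :
    {F | IsFaceOf P F ∧ polyDim F = 1}.Finite ∧
    {F | IsFaceOf P F ∧ polyDim F = 1}.ncard ≤ k.choose (k / 2) ∧
    {F | IsFaceOf P F ∧ polyDim F = 1}.ncard ≤ 2 ^ k := by
  classical
  obtain ⟨V, hPV⟩ := hP
  have hfr : Module.finrank ℝ (ESp d) = d := finrank_euclideanSpace_fin
  have hPne : P.Nonempty := nonempty_of_polyDim_pos (by rw [hdim]; omega)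
  have htop : affineSpan ℝ P = ⊤ := by
    rw [← AffineSubspace.direction_eq_top_iff_of_nonempty
      ((affineSpan_nonempty (k := ℝ) (s := P)).mpr hPne)]
    exact Submodule.eq_top_of_finrank_eq (by rw [hfr]; exact hdim)
  set Facets := {F | IsFaceOf P F ∧ polyDim F + 1 = d} with hFacets
  set Edges := {F | IsFaceOf P F ∧ polyDim F = 1} with hEdges
  set f : Set (ESp d) → Finset {F // F ∈ hfin.toFinset} :=
    fun E => Finset.univ.filter (fun G => E ⊆ G.1) with hfdef
  have key : ∀ E ∈ Edges, ∀ E' ∈ Edges, f E ⊆ f E' → E = E' := by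
    rintro E ⟨hEf, hE1⟩ E' ⟨hE'f, hE'1⟩ hff
    have hsub : E' ⊆ E := by
      have hEeq := edge_eq_inter hPV htop hEf hE1
      rw [hEeq]
      intro x hx
      refine ⟨face_subset hE'f hx, ?_⟩
      intro G hGf hGd hEG
      have hGmem : G ∈ hfin.toFinset := by
        rw [Set.Finite.mem_toFinset]; exact ⟨hGf, hGd⟩
      have h1 : (⟨G, hGmem⟩ : {F // F ∈ hfin.toFinset}) ∈ f E := by
        simp only [hfdef, Finset.mem_filter, Finset.mem_univ, true_and]
        exact hEG
      have h2 := hff h1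
      simp only [hfdef, Finset.mem_filter, Finset.mem_univ, true_and] at h2
      exact h2 hx
    exact edge_eq_of_subset hd hdim hEf hE1 hE'f hE'1 hsub
  have hinjOn : Set.InjOn f Edges := fun E hE E' hE' h =>
    key E hE E' hE' (by rw [h])
  have hEfin : Edges.Finite :=
    Set.Finite.of_finite_image (Set.toFinite _) hinjOn
  have hmain : Edges.ncard ≤ k.choose (k / 2) := by
    set A : Finset (Finset {F // F ∈ hfin.toFinset}) := hEfin.toFinset.image f with hA
    have hinj2 : Set.InjOn f ↑hEfin.toFinset := by
      rw [Set.Finite.coe_toFinset]; exact hinjOn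
    have hcardA : A.card = Edges.ncard := by
      rw [hA, Finset.card_image_of_injOn hinj2, ← Set.ncard_eq_toFinset_card _ hEfin]
    have hanti : IsAntichain (· ⊆ ·) (A : Set (Finset {F // F ∈ hfin.toFinset})) := by
      rintro B hB B' hB' hne hBB'
      rw [Finset.mem_coe, hA, Finset.mem_image] at hB hB'
      obtain ⟨E, hE, rfl⟩ := hB
      obtain ⟨E', hE', rfl⟩ := hB'
      rw [Set.Finite.mem_toFinset] at hE hE'
      exact hne (by rw [key E hE E' hE' hBB'])
    have hsp := IsAntichain.sperner hanti
    have hcardle : Fintype.card {F // F ∈ hfin.toFinset} ≤ k := by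
      rw [Fintype.card_coe]
      rw [← Set.ncard_eq_toFinset_card _ hfin]
      exact hfacets
    calc Edges.ncard = A.card := hcardA.symm
      _ ≤ (Fintype.card {F // F ∈ hfin.toFinset}).choose
            (Fintype.card {F // F ∈ hfin.toFinset} / 2) := hsp
      _ ≤ k.choose (Fintype.card {F // F ∈ hfin.toFinset} / 2) :=
            Nat.choose_le_choose _ hcardle
      _ ≤ k.choose (k / 2) := Nat.choose_le_middle _ _
  refine ⟨hEfin, hmain, hmain.trans ?_⟩
  calc k.choose (k / 2) ≤ ∑ m ∈ Finset.range (k + 1), k.choose m :=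
        Finset.single_le_sum (fun i _ => Nat.zero_le _)
          (Finset.mem_range.mpr (by omega))
    _ = 2 ^ k := Nat.sum_range_choose k
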